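/- Let Σ be a siphon of the all-encompassing processive network (with reactions P_i + E_i → C_{i1} → ⋯ → C_{i n_i} → P_{i+1} + E_i for each i, indices mod m, plus possibly some reverse reactions). Then either there exists an index i such that {E_i, C_{i1}, …, C_{i n_i}} ⊆ Σ, or Σ contains all of the species P₁, …, P_m and all of the C_{ij}. Consequently, every siphon contains the support of a nonnegative conservation law, so the network has the siphon/P-semiflow property. -/

import Mathlib

/-- Species of the all-encompassing processive network: substrates `P i`
(`Sum.inl i`), enzymes `E i` (`Sum.inr (Sum.inl i)`), and intermediates `C i j`
(`Sum.inr (Sum.inr ⟨i, j⟩)`). -/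
def AESpecies (m : ℕ) (n : Fin m → ℕ) : Type :=
  Fin m ⊕ Fin m ⊕ (Σ i : Fin m, Fin (n i))

/-- `x` is a reactant species of the `j`-th forward reaction of component `i`
(`j = 0`: binding `P i + E i → C i 1`; `1 ≤ j ≤ n i`: reactant `C i j`,
0-indexed as `C i (j-1)`). -/
def AEreact (m : ℕ) (n : Fin m → ℕ) (i : Fin m) (j : ℕ) (x : AESpecies m n) : Prop :=
  (j = 0 ∧ (x = Sum.inl i ∨ x = Sum.inr (Sum.inl i))) ∨
  (∃ j' : Fin (n i), (j' : ℕ) + 1 = j ∧ x = Sum.inr (Sum.inr ⟨i, j'⟩))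

/-- `x` is a product species of the `j`-th forward reaction of component `i`
(`j = n i`: release giving `P (i+1) + E i`, with `P`-index mod `m`; `j < n i`:
product `C i (j+1)`, 0-indexed as `C i j`). -/
def AEprod (m : ℕ) (n : Fin m → ℕ) (i : Fin m) (j : ℕ) (x : AESpecies m n) : Prop :=
  (j = n i ∧ ((∃ p : Fin m, (p : ℕ) = ((i : ℕ) + 1) % m ∧ x = Sum.inl p) ∨
      x = Sum.inr (Sum.inl i))) ∨
  (∃ j' : Fin (n i), (j' : ℕ) = j ∧ x = Sum.inr (Sum.inr ⟨i, j'⟩))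

/-- A siphon of the all-encompassing network whose reactions are all forward
reactions together with the reverse reactions indexed by `Rev`: a nonempty set of
species such that every reaction with a product species in the set has a reactant
species in the set. -/
def AESiphon (m : ℕ) (n : Fin m → ℕ) (Rev : Set (Fin m × ℕ))
    (Sig : Set (AESpecies m n)) : Prop :=
  Sig.Nonempty ∧
  (∀ (i : Fin m) (j : ℕ), j ≤ n i →
    ((∃ x ∈ Sig, AEprod m n i j x) → ∃ x ∈ Sig, AEreact m n i j x)) ∧
  (∀ (i : Fin m) (j : ℕ), j ≤ n i → (i, j) ∈ Rev →
    ((∃ x ∈ Sig, AEreact m n i j x) → ∃ x ∈ Sig, AEprod m n i j x))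

/-- Every siphon of the all-encompassing processive network contains, for some
`i`, all of `{E i, C i 1, …, C i (n i)}`, or else contains all the `P i` and all
the `C i j`; hence every siphon contains the support of a nonnegative conservation
law (the enzyme semiflow `v⁽ⁱ⁾` or the total-substrate semiflow `w`). -/
theorem stmt14 (m : ℕ) (hm : 2 ≤ m) (n : Fin m → ℕ) (hn : ∀ i, 1 ≤ n i)
    (Rev : Set (Fin m × ℕ)) (Sig : Set (AESpecies m n))
    (hSig : AESiphon m n Rev Sig) :
    (∃ i : Fin m, Sum.inr (Sum.inl i) ∈ Sig ∧
      ∀ j : Fin (n i), Sum.inr (Sum.inr ⟨i, j⟩) ∈ Sig) ∨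
    ((∀ p : Fin m, Sum.inl p ∈ Sig) ∧
      ∀ (i : Fin m) (j : Fin (n i)), Sum.inr (Sum.inr ⟨i, j⟩) ∈ Sig) := by
  haveI : NeZero m := ⟨by omega⟩
  obtain ⟨hne, hF, -⟩ := hSig
  have hval1 : ∀ a : Fin m, ((a + 1 : Fin m) : ℕ) = ((a : ℕ) + 1) % m := by
    intro a
    simp [Fin.val_add, Fin.val_one', Nat.mod_eq_of_lt (show 1 < m by omega)]
  -- downward closure among intermediates of a component
  have hdown : ∀ (i : Fin m) (jv : ℕ) (hjv : jv < n i),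
      Sum.inr (Sum.inr ⟨i, ⟨jv, hjv⟩⟩) ∈ Sig →
      ∀ (k : ℕ) (hk : k < n i), k ≤ jv → Sum.inr (Sum.inr ⟨i, ⟨k, hk⟩⟩) ∈ Sig := by
    intro i jv
    induction jv with
    | zero =>
      intro hjv hmem k hk hkle
      have : k = 0 := Nat.le_zero.mp hkle
      subst this; exact hmem
    | succ jv ih =>
      intro hjv hmem k hk hkle
      rcases Nat.eq_or_lt_of_le hkle with heq | hlt
      · subst heq; exact hmem
      · have hprev : Sum.inr (Sum.inr ⟨i, ⟨jv, Nat.lt_of_succ_lt hjv⟩⟩) ∈ Sig := by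
          obtain ⟨x, hx, hr⟩ := hF i (jv + 1) (le_of_lt hjv)
            ⟨_, hmem, Or.inr ⟨⟨jv + 1, hjv⟩, rfl, rfl⟩⟩
          rcases hr with ⟨h0, -⟩ | ⟨j', hj', hx'⟩
          · omega
          · have hj'eq : j' = ⟨jv, Nat.lt_of_succ_lt hjv⟩ := Fin.ext (show (j' : ℕ) = jv by omega)
            rw [hx', hj'eq] at hx
            exact hx
        exact ih (Nat.lt_of_succ_lt hjv) hprev k hk (by omega)
  -- from C i 0 we get P i or E i
  have hC0 : ∀ i : Fin m, Sum.inr (Sum.inr ⟨i, ⟨0, hn i⟩⟩) ∈ Sig →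
      Sum.inl i ∈ Sig ∨ Sum.inr (Sum.inl i) ∈ Sig := by
    intro i h0
    obtain ⟨x, hx, hr⟩ := hF i 0 (Nat.zero_le _)
      ⟨_, h0, Or.inr ⟨⟨0, hn i⟩, rfl, rfl⟩⟩
    rcases hr with ⟨-, hx' | hx'⟩ | ⟨j', hj', -⟩
    · left; rwa [hx'] at hx
    · right; rwa [hx'] at hx
    · omega
  -- from a product of the release reaction of component i, get all C i j and (P i or E i)
  have hstep : ∀ i : Fin m, (∃ x ∈ Sig, AEprod m n i (n i) x) →
      (∀ j : Fin (n i), Sum.inr (Sum.inr ⟨i, j⟩) ∈ Sig) ∧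
      (Sum.inl i ∈ Sig ∨ Sum.inr (Sum.inl i) ∈ Sig) := by
    intro i hex
    obtain ⟨x, hx, hr⟩ := hF i (n i) le_rfl hex
    rcases hr with ⟨h0, -⟩ | ⟨j', hj', hx'⟩
    · have := hn i; omega
    · rw [hx'] at hx
      have htopC : Sum.inr (Sum.inr ⟨i, ⟨(j' : ℕ), j'.isLt⟩⟩) ∈ Sig := by
        rw [Fin.eta]; exact hx
      have hall : ∀ j : Fin (n i), Sum.inr (Sum.inr ⟨i, j⟩) ∈ Sig := by
        intro j
        have := hdown i (j' : ℕ) j'.isLt htopC (j : ℕ) j.isLt (by omega)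
        rwa [Fin.eta] at this
      exact ⟨hall, hC0 i (hall ⟨0, hn i⟩)⟩
  by_cases hE : ∃ i : Fin m, Sum.inr (Sum.inl i) ∈ Sig
  · obtain ⟨i, hEi⟩ := hE
    left
    exact ⟨i, hEi, (hstep i ⟨_, hEi, Or.inl ⟨rfl, Or.inr rfl⟩⟩).1⟩
  · push_neg at hE
    -- step backwards along the substrate cycle
    have hPstep : ∀ q : Fin m, Sum.inl q ∈ Sig →
        Sum.inl (q - 1) ∈ Sig ∧
        ∀ j : Fin (n (q - 1)), Sum.inr (Sum.inr ⟨q - 1, j⟩) ∈ Sig := by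
      intro q hq
      have hvq : (q : ℕ) = (((q - 1 : Fin m) : ℕ) + 1) % m := by
        have h1 : (q - 1) + 1 = q := sub_add_cancel q 1
        have := congrArg Fin.val h1
        rw [hval1] at this
        omega
      obtain ⟨hall, hPE⟩ := hstep (q - 1) ⟨_, hq, Or.inl ⟨rfl, Or.inl ⟨q, hvq, rfl⟩⟩⟩
      rcases hPE with hP | hEbad
      · exact ⟨hP, hall⟩
      · exact absurd hEbad (hE _)
    -- some substrate is in Sig
    have hq0 : ∃ q : Fin m, Sum.inl q ∈ Sig := by
      obtain ⟨x, hx⟩ := hne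
      rcases x with p | i | ⟨i, j⟩
      · exact ⟨p, hx⟩
      · exact absurd hx (hE i)
      · have h0 : Sum.inr (Sum.inr ⟨i, ⟨0, hn i⟩⟩) ∈ Sig := by
          have := hdown i (j : ℕ) j.isLt (by rw [Fin.eta]; exact hx) 0 (hn i) (Nat.zero_le _)
          exact this
        rcases hC0 i h0 with hP | hEbad
        · exact ⟨i, hP⟩
        · exact absurd hEbad (hE i)
    obtain ⟨q0, hq0⟩ := hq0
    open Fin.NatCast in
    have hallk : ∀ k : ℕ, Sum.inl (q0 - (k : Fin m)) ∈ Sig := by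
      intro k
      induction k with
      | zero => simpa using hq0
      | succ k ih =>
        have : q0 - ((k + 1 : ℕ) : Fin m) = (q0 - (k : Fin m)) - 1 := by
          push_cast
          rw [sub_sub]
        rw [this]
        exact (hPstep _ ih).1
    open Fin.NatCast in
    have hallP : ∀ p : Fin m, Sum.inl p ∈ Sig := by
      intro p
      have := hallk ((q0 - p : Fin m) : ℕ)
      rwa [Fin.cast_val_eq_self, sub_sub_cancel] at this
    right
    refine ⟨hallP, ?_⟩
    intro i j
    have h := (hPstep (i + 1) (hallP (i + 1))).2
    rw [add_sub_cancel_right] at h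
    exact h j
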